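/- Let J ⊂ K[x_1,...,x_n] be an Artinian almost revlex ideal with Hilbert function H of R/J. Then for every s ≥ 0, the s-reduction number r_s = min{t : x_{n-s}^{t+1} ∈ J} equals c_s(H) := max{c : Δ^s H(j) > 0 for all 0 ≤ j ≤ c}, where Δ^s H is the s-th finite difference of H. In particular, r_0 = reg(J) - 1 = c_0(H). -/

import Mathlib

open Finset

/-- Total degree of a monomial (exponent vector). -/
def mdeg {n : ℕ} (α : Fin n →₀ ℕ) : ℕ := α.sum fun _ e => e

/-- A set of exponent vectors is the set of monomials of a monomial ideal. -/
def IsMonIdeal {n : ℕ} (S : Set (Fin n →₀ ℕ)) : Prop :=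
  ∀ α ∈ S, ∀ β : Fin n →₀ ℕ, α + β ∈ S

/-- `α` is a minimal monomial generator of the monomial ideal with monomials `S`. -/
def MinGen {n : ℕ} (S : Set (Fin n →₀ ℕ)) (α : Fin n →₀ ℕ) : Prop :=
  α ∈ S ∧ ∀ β ∈ S, β ≤ α → β = α

/-- Stable monomial ideal (variables ordered `x_1 ≻ ⋯ ≻ x_n`, i.e. index `0` largest). -/
def IsStable {n : ℕ} (S : Set (Fin n →₀ ℕ)) : Prop :=
  ∀ α ∈ S, ∀ m ∈ α.support, (∀ k ∈ α.support, k ≤ m) →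
    ∀ i : Fin n, i < m → α - Finsupp.single m 1 + Finsupp.single i 1 ∈ S

def IsStronglyStable {n : ℕ} (S : Set (Fin n →₀ ℕ)) : Prop :=
  ∀ α ∈ S, ∀ i ∈ α.support, ∀ j : Fin n, j < i →
    α - Finsupp.single i 1 + Finsupp.single j 1 ∈ S

/-- `drlLT α β` : `α` is smaller than `β` in degrevlex with `x_1 ≻ ⋯ ≻ x_n`. -/
def drlLT {n : ℕ} (α β : Fin n →₀ ℕ) : Prop :=
  mdeg α < mdeg β ∨ (mdeg α = mdeg β ∧ ∃ i : Fin n, β i < α i ∧ ∀ j : Fin n, i < j → α j = β j)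

def IsAlmostRevLex {n : ℕ} (S : Set (Fin n →₀ ℕ)) : Prop :=
  IsMonIdeal S ∧ ∀ α, MinGen S α → ∀ β : Fin n →₀ ℕ, mdeg β = mdeg α → drlLT α β → β ∈ S

/-- Combinatorial Hilbert function of `R/J`: number of degree-`t` monomials outside `S`. -/
noncomputable def hilbC {n : ℕ} (S : Set (Fin n →₀ ℕ)) (t : ℕ) : ℕ :=
  {α : Fin n →₀ ℕ | mdeg α = t ∧ α ∉ S}.ncard

/-- `fdiff H s t` is `Δ^s H (t)` with the convention `Δ^s H (0) = 1` for `s ≥ 1`. -/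
def fdiff (H : ℕ → ℕ) : ℕ → ℕ → ℤ
  | 0, t => H t
  | _+1, 0 => 1
  | s+1, t+1 => fdiff H s (t+1) - fdiff H s t

/- ### auxiliary lemmas -/

lemma mdeg_sum {n : ℕ} (α : Fin n →₀ ℕ) : mdeg α = ∑ i, α i :=
  Finsupp.sum_fintype _ _ (fun _ => rfl)

lemma mdeg_single {n : ℕ} (i : Fin n) (e : ℕ) : mdeg (Finsupp.single i e) = e :=
  Finsupp.sum_single_index rfl

lemma mdeg_add {n : ℕ} (α β : Fin n →₀ ℕ) : mdeg (α + β) = mdeg α + mdeg β :=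
  Finsupp.sum_add_index' (fun _ => rfl) (fun _ _ _ => rfl)

lemma mdeg_zero {n : ℕ} : mdeg (0 : Fin n →₀ ℕ) = 0 := by
  simp [mdeg]

lemma mdeg_eq_zero {n : ℕ} {α : Fin n →₀ ℕ} (h : mdeg α = 0) : α = 0 := by
  rw [mdeg_sum] at h
  ext i
  exact (Finset.sum_eq_zero_iff.mp h) i (Finset.mem_univ i)

lemma mdeg_mono {n : ℕ} {α β : Fin n →₀ ℕ} (h : α ≤ β) : mdeg α ≤ mdeg β := by
  rw [mdeg_sum, mdeg_sum]
  exact Finset.sum_le_sum (fun i _ => Finsupp.le_def.mp h i)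

lemma mdeg_lt {n : ℕ} {α β : Fin n →₀ ℕ} (h : α ≤ β) (hne : α ≠ β) : mdeg α < mdeg β := by
  rw [mdeg_sum, mdeg_sum]
  have : ∃ i, α i ≠ β i := by
    by_contra hc
    push_neg at hc
    exact hne (Finsupp.ext hc)
  obtain ⟨i, hi⟩ := this
  exact Finset.sum_lt_sum (fun j _ => Finsupp.le_def.mp h j)
    ⟨i, Finset.mem_univ i, lt_of_le_of_ne (Finsupp.le_def.mp h i) hi⟩

lemma apply_le_mdeg {n : ℕ} (α : Fin n →₀ ℕ) (i : Fin n) : α i ≤ mdeg α := by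
  rw [mdeg_sum]
  exact Finset.single_le_sum (fun j _ => Nat.zero_le _) (Finset.mem_univ i)

lemma eq_single_of_apply_eq_mdeg {n : ℕ} {α : Fin n →₀ ℕ} {i : Fin n}
    (h : α i = mdeg α) : α = Finsupp.single i (α i) := by
  have hle : Finsupp.single i (α i) ≤ α := Finsupp.single_le_iff.mpr le_rfl
  have hc : Finsupp.single i (α i) + (α - Finsupp.single i (α i)) = α := add_tsub_cancel_of_le hle
  have hd : mdeg (α - Finsupp.single i (α i)) = 0 := by
    have := congrArg mdeg hc
    rw [mdeg_add, mdeg_single] at this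
    omega
  rw [mdeg_eq_zero hd, add_zero] at hc
  exact hc.symm

lemma mem_of_le_mem {n : ℕ} {S : Set (Fin n →₀ ℕ)} (hS : IsMonIdeal S)
    {τ α : Fin n →₀ ℕ} (hτ : τ ∈ S) (h : τ ≤ α) : α ∈ S := by
  have := hS τ hτ (α - τ)
  rwa [add_tsub_cancel_of_le h] at this

lemma exists_minGen {n : ℕ} {S : Set (Fin n →₀ ℕ)} {β : Fin n →₀ ℕ} (hβ : β ∈ S) :
    ∃ τ, MinGen S τ ∧ τ ≤ β := by
  obtain ⟨d, hd⟩ : ∃ d, mdeg β = d := ⟨_, rfl⟩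
  induction d using Nat.strong_induction_on generalizing β with
  | _ d ih =>
    by_cases h : MinGen S β
    · exact ⟨β, h, le_rfl⟩
    · have hex : ∃ δ ∈ S, δ ≤ β ∧ δ ≠ β := by
        unfold MinGen at h
        push_neg at h
        obtain ⟨δ, h1, h2, h3⟩ := h hβ
        exact ⟨δ, h1, h2, h3⟩
      obtain ⟨δ, hδS, hδβ, hne⟩ := hex
      obtain ⟨τ, hτ, hτδ⟩ := ih (mdeg δ) (by rw [← hd]; exact mdeg_lt hδβ hne) hδS rfl
      exact ⟨τ, hτ, hτδ.trans hδβ⟩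

/-- Key lemma: if `α ∉ S`, `α` supported on coordinates `≤ i₀`, and some monomial `γ` of
degree `mdeg α + 1` supported on coordinates `< i₀` is outside `S`, then `α·x_{i₀} ∉ S`. -/
lemma keyK {n : ℕ} {S : Set (Fin n →₀ ℕ)} (hS : IsAlmostRevLex S)
    {α γ : Fin n →₀ ℕ} {i₀ : Fin n}
    (hα : α ∉ S) (hαz : ∀ j : Fin n, i₀ < j → α j = 0)
    (hγd : mdeg γ = mdeg α + 1) (hγz : ∀ j : Fin n, i₀ ≤ j → γ j = 0) (hγ : γ ∉ S) :
    α + Finsupp.single i₀ 1 ∉ S := by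
  intro hβ
  set β := α + Finsupp.single i₀ 1 with hβdef
  have hβa : ∀ j, j ≠ i₀ → β j = α j := by
    intro j hj
    rw [hβdef, Finsupp.add_apply, Finsupp.single_apply, if_neg (Ne.symm hj), add_zero]
  have hβi₀ : β i₀ = α i₀ + 1 := by
    rw [hβdef, Finsupp.add_apply, Finsupp.single_eq_same]
  have hβd : mdeg β = mdeg α + 1 := by rw [hβdef, mdeg_add, mdeg_single]
  obtain ⟨τ, hτ, hτβ⟩ := exists_minGen hβ
  have hτle : ∀ j, τ j ≤ β j := Finsupp.le_def.mp hτβ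
  have hτi₀ : τ i₀ = α i₀ + 1 := by
    by_contra h
    have h2 : τ i₀ ≤ α i₀ := by have := hτle i₀; omega
    have hτα : τ ≤ α := by
      rw [Finsupp.le_def]
      intro j
      by_cases hj : j = i₀
      · rw [hj]; exact h2
      · rw [← hβa j hj]; exact hτle j
    exact hα (mem_of_le_mem hS.1 hτ.1 hτα)
  by_cases hc : τ = β
  · -- τ = β is a minimal generator; every γ supported below i₀ of the same degree is in S
    apply hγ
    apply hS.2 τ hτ γ
    · rw [hc, hβd, hγd]
    · refine Or.inr ⟨by rw [hc, hβd, hγd], i₀, ?_, ?_⟩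
      · rw [hγz i₀ le_rfl, hc, hβi₀]; omega
      · intro j hj
        rw [hc, hβa j (ne_of_gt hj), hαz j hj, hγz j (le_of_lt hj)]
  · -- τ properly divides β : exchange x_{i₀} by a smaller variable
    have hex : ∃ j, τ j < β j := by
      by_contra h
      push_neg at h
      exact hc (le_antisymm hτβ (Finsupp.le_def.mpr h))
    obtain ⟨j, hj⟩ := hex
    have hji₀ : j ≠ i₀ := by
      intro h
      rw [h, hτi₀, hβi₀] at hj
      omega
    have hβj : β j = α j := hβa j hji₀
    have hjlt : ¬ i₀ < j := by
      intro h
      rw [hβj, hαz j h] at hj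
      omega
    set τ' := τ - Finsupp.single i₀ 1 + Finsupp.single j 1 with hτ'def
    have hv1 : τ' i₀ = τ i₀ - 1 := by
      rw [hτ'def, Finsupp.add_apply, Finsupp.tsub_apply, Finsupp.single_eq_same,
        Finsupp.single_apply, if_neg hji₀, add_zero]
    have hv3 : τ' j = τ j + 1 := by
      rw [hτ'def, Finsupp.add_apply, Finsupp.tsub_apply, Finsupp.single_apply,
        if_neg (Ne.symm hji₀), Finsupp.single_eq_same, Nat.sub_zero]
    have hv2 : ∀ k, k ≠ i₀ → k ≠ j → τ' k = τ k := by
      intro k h1 h2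
      rw [hτ'def, Finsupp.add_apply, Finsupp.tsub_apply, Finsupp.single_apply,
        if_neg (Ne.symm h1), Finsupp.single_apply, if_neg (Ne.symm h2), Nat.sub_zero, add_zero]
    have hsle : Finsupp.single i₀ 1 ≤ τ := Finsupp.single_le_iff.mpr (by omega)
    have hτs : (τ - Finsupp.single i₀ 1) + Finsupp.single i₀ 1 = τ := tsub_add_cancel_of_le hsle
    have hmd : mdeg τ' = mdeg τ := by
      rw [hτ'def, mdeg_add, mdeg_single]
      conv_rhs => rw [← hτs]
      rw [mdeg_add, mdeg_single]
    have hτ'S : τ' ∈ S := by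
      apply hS.2 τ hτ τ' hmd
      refine Or.inr ⟨hmd.symm, i₀, ?_, ?_⟩
      · rw [hv1]; omega
      · intro k hk
        have hk1 : k ≠ i₀ := (ne_of_gt hk)
        have hk2 : k ≠ j := by
          intro h
          rw [h] at hk
          exact hjlt hk
        exact (hv2 k hk1 hk2).symm
    have hτ'α : τ' ≤ α := by
      rw [Finsupp.le_def]
      intro k
      by_cases h1 : k = i₀
      · rw [h1, hv1, hτi₀]; omega
      · by_cases h2 : k = j
        · rw [h2, hv3]
          rw [hβj] at hj
          omega
        · rw [hv2 k h1 h2, ← hβa k h1]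
          exact hτle k
    exact hα (mem_of_le_mem hS.1 hτ'S hτ'α)

lemma single_transfer {n : ℕ} {S : Set (Fin n →₀ ℕ)} (hS : IsAlmostRevLex S)
    (h0 : (0 : Fin n →₀ ℕ) ∉ S) {i₁ i₀ : Fin n} (h : i₁ < i₀) {t : ℕ}
    (ht : Finsupp.single i₁ t ∉ S) : Finsupp.single i₀ t ∉ S := by
  intro hmem
  obtain ⟨τ, hτ, hτle⟩ := exists_minGen hmem
  have hτs : τ = Finsupp.single i₀ (τ i₀) := by
    ext k
    by_cases hk : k = i₀
    · rw [hk, Finsupp.single_eq_same]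
    · have := Finsupp.le_def.mp hτle k
      rw [Finsupp.single_apply, if_neg (Ne.symm hk)] at this ⊢
      omega
  set e := τ i₀ with he
  have he1 : 1 ≤ e := by
    rcases Nat.eq_zero_or_pos e with h | h
    · exact absurd (show (0 : Fin n →₀ ℕ) ∈ S by
        have hτ0 : τ = 0 := by rw [hτs, h, Finsupp.single_zero]
        exact hτ0 ▸ hτ.1) h0
    · exact h
  have het : e ≤ t := by
    have := Finsupp.le_def.mp hτle i₀
    rwa [Finsupp.single_eq_same] at this
  have hmem2 : Finsupp.single i₁ e ∈ S := by
    apply hS.2 τ hτ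
    · rw [hτs, mdeg_single, mdeg_single]
    · refine Or.inr ⟨by rw [hτs, mdeg_single, mdeg_single], i₀, ?_, ?_⟩
      · rw [Finsupp.single_apply, if_neg (ne_of_lt h), hτs, Finsupp.single_eq_same]
        omega
      · intro k hk
        rw [hτs, Finsupp.single_apply, if_neg (ne_of_lt hk), Finsupp.single_apply,
          if_neg (ne_of_lt (h.trans hk))]
  apply ht
  have := hS.1 _ hmem2 (Finsupp.single i₁ (t - e))
  rwa [← Finsupp.single_add, Nat.add_sub_cancel' het] at this

/- ### counting -/

def Aset {n : ℕ} (S : Set (Fin n →₀ ℕ)) (s t : ℕ) : Set (Fin n →₀ ℕ) :=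
  {α | mdeg α = t ∧ α ∉ S ∧ ∀ j : Fin n, n - s ≤ (j : ℕ) → α j = 0}

lemma Aset_finite {n : ℕ} {S : Set (Fin n →₀ ℕ)} (hArt : {α : Fin n →₀ ℕ | α ∉ S}.Finite)
    (s t : ℕ) : (Aset S s t).Finite :=
  hArt.subset (fun _ h => h.2.1)

lemma Aset_zero {n : ℕ} {S : Set (Fin n →₀ ℕ)} (h0 : (0 : Fin n →₀ ℕ) ∉ S) (s : ℕ) :
    Aset S s 0 = {(0 : Fin n →₀ ℕ)} := by
  ext α
  constructor
  · intro h
    exact mdeg_eq_zero h.1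
  · intro h
    rw [Set.mem_singleton_iff] at h
    subst h
    exact ⟨mdeg_zero, h0, fun _ _ => rfl⟩

lemma Aset_level_zero {n : ℕ} (S : Set (Fin n →₀ ℕ)) (t : ℕ) :
    Aset S 0 t = {α : Fin n →₀ ℕ | mdeg α = t ∧ α ∉ S} := by
  ext α
  simp only [Aset, Set.mem_setOf_eq]
  refine ⟨fun h => ⟨h.1, h.2.1⟩, fun h => ⟨h.1, h.2, fun j hj => ?_⟩⟩
  exact absurd j.isLt (by omega)

/-- The splitting of `Aset S s (t+1)` by the exponent of `x_{i₀}`, `i₀ = n-1-s`. -/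
lemma Aset_split {n : ℕ} {S : Set (Fin n →₀ ℕ)} (hS : IsAlmostRevLex S)
    (hArt : {α : Fin n →₀ ℕ | α ∉ S}.Finite) (hn : 1 ≤ n) (s t : ℕ) (hs : s + 1 ≤ n - 1) :
    ((Aset S s (t+1)).ncard ≤ (Aset S (s+1) (t+1)).ncard + (Aset S s t).ncard) ∧
    (Finsupp.single (⟨n - 1 - (s+1), by omega⟩ : Fin n) (t+1) ∉ S →
      (Aset S s (t+1)).ncard = (Aset S (s+1) (t+1)).ncard + (Aset S s t).ncard) := by
  set i₁ : Fin n := ⟨n - 1 - (s+1), by omega⟩ with hi₁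
  set i₀ : Fin n := ⟨n - 1 - s, by omega⟩ with hi₀
  have hval : (i₀ : ℕ) = n - 1 - s := rfl
  have hval1 : (i₁ : ℕ) = n - 1 - (s+1) := rfl
  set P0 := {α ∈ Aset S s (t+1) | α i₀ = 0} with hP0def
  set P1 := {α ∈ Aset S s (t+1) | α i₀ ≠ 0} with hP1def
  have hunion : Aset S s (t+1) = P0 ∪ P1 := by
    ext α
    simp only [hP0def, hP1def, Set.mem_union, Set.mem_setOf_eq, Set.mem_sep_iff]
    tauto
  have hdis : Disjoint P0 P1 := by
    rw [Set.disjoint_left]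
    intro α h1 h2
    exact h2.2 h1.2
  have hfin0 : P0.Finite := (Aset_finite hArt s (t+1)).subset (fun _ h => h.1)
  have hfin1 : P1.Finite := (Aset_finite hArt s (t+1)).subset (fun _ h => h.1)
  have hcard : (Aset S s (t+1)).ncard = P0.ncard + P1.ncard := by
    rw [hunion, Set.ncard_union_eq hdis hfin0 hfin1]
  have hP0 : P0 = Aset S (s+1) (t+1) := by
    ext α
    simp only [hP0def, Set.mem_sep_iff, Aset, Set.mem_setOf_eq]
    constructor
    · rintro ⟨⟨h1, h2, h3⟩, h4⟩
      refine ⟨h1, h2, fun j hj => ?_⟩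
      by_cases hj2 : n - s ≤ (j : ℕ)
      · exact h3 j hj2
      · have : j = i₀ := Fin.ext (by omega)
        rw [this]; exact h4
    · rintro ⟨h1, h2, h3⟩
      exact ⟨⟨h1, h2, fun j hj => h3 j (by omega)⟩, h3 i₀ (by omega)⟩
  -- map α ↦ α - x_{i₀} from P1 into Aset S s t
  have hmaps : ∀ α ∈ P1, α - Finsupp.single i₀ 1 ∈ Aset S s t := by
    rintro α ⟨⟨h1, h2, h3⟩, h4⟩
    have hle : Finsupp.single i₀ 1 ≤ α := Finsupp.single_le_iff.mpr (by omega)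
    have hcan : (α - Finsupp.single i₀ 1) + Finsupp.single i₀ 1 = α := tsub_add_cancel_of_le hle
    refine ⟨?_, ?_, ?_⟩
    · have := congrArg mdeg hcan
      rw [mdeg_add, mdeg_single, h1] at this
      omega
    · intro hmem
      exact h2 (mem_of_le_mem hS.1 hmem tsub_le_self)
    · intro j hj
      rw [Finsupp.tsub_apply, h3 j hj, Nat.zero_sub]
  have hinj : Set.InjOn (· - Finsupp.single i₀ 1) P1 := by
    rintro α ⟨_, h4⟩ α' ⟨_, h4'⟩ h
    have hle : Finsupp.single i₀ 1 ≤ α := Finsupp.single_le_iff.mpr (by omega)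
    have hle' : Finsupp.single i₀ 1 ≤ α' := Finsupp.single_le_iff.mpr (by omega)
    rw [← tsub_add_cancel_of_le hle, ← tsub_add_cancel_of_le hle']
    simp only at h
    rw [h]
  constructor
  · rw [hcard, hP0]
    have := Set.ncard_le_ncard_of_injOn _ hmaps hinj (Aset_finite hArt s t)
    omega
  · intro hγ
    have hP1 : P1 = (· + Finsupp.single i₀ 1) '' Aset S s t := by
      ext α
      constructor
      · intro hα
        have h4 : α i₀ ≠ 0 := hα.2
        have hle : Finsupp.single i₀ 1 ≤ α := Finsupp.single_le_iff.mpr (by omega)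
        exact ⟨α - Finsupp.single i₀ 1, hmaps α hα, tsub_add_cancel_of_le hle⟩
      · rintro ⟨α', ⟨h1, h2, h3⟩, rfl⟩
        have hz : ∀ j : Fin n, i₀ < j → α' j = 0 := by
          intro j hj
          rw [Fin.lt_def] at hj
          exact h3 j (by omega)
        have hnotS : α' + Finsupp.single i₀ 1 ∉ S := by
          apply keyK hS h2 hz (γ := Finsupp.single i₁ (t+1))
          · rw [mdeg_single, h1]
          · intro j hj
            rw [Fin.le_def] at hj
            have hne : i₁ ≠ j := by
              intro hc
              rw [← hc] at hj
              omega
            rw [Finsupp.single_apply, if_neg hne]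
          · exact hγ
        refine ⟨⟨?_, hnotS, ?_⟩, ?_⟩
        · rw [mdeg_add, mdeg_single, h1]
        · intro j hj
          have hne : i₀ ≠ j := by
            intro hc
            rw [← hc] at hj
            omega
          rw [Finsupp.add_apply, h3 j hj, Finsupp.single_apply, if_neg hne]
          rfl
        · simp only [Set.mem_setOf_eq, Finsupp.add_apply, Finsupp.single_eq_same]
          omega
    rw [hcard, hP0, hP1, Set.ncard_image_of_injective _ (add_left_injective _)]

/-- Above the reduction number, there are no standard monomials in the first `n-s` variables. -/
lemma Aset_top {n : ℕ} {S : Set (Fin n →₀ ℕ)} (hS : IsAlmostRevLex S)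
    (h0 : (0 : Fin n →₀ ℕ) ∉ S) (hn : 1 ≤ n) {s r : ℕ} (hs : s ≤ n - 1)
    (hr1 : Finsupp.single (⟨n - 1 - s, Nat.lt_of_le_of_lt (Nat.sub_le _ _) (Nat.sub_lt hn Nat.one_pos)⟩ : Fin n) (r + 1) ∈ S)
    (hrmin : ∀ t, Finsupp.single (⟨n - 1 - s, Nat.lt_of_le_of_lt (Nat.sub_le _ _) (Nat.sub_lt hn Nat.one_pos)⟩ : Fin n) (t + 1) ∈ S → r ≤ t) :
    Aset S s (r + 1) = ∅ := by
  set i₀ : Fin n := ⟨n - 1 - s, Nat.lt_of_le_of_lt (Nat.sub_le _ _) (Nat.sub_lt hn Nat.one_pos)⟩ with hi₀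
  have hval : (i₀ : ℕ) = n - 1 - s := rfl
  rw [Set.eq_empty_iff_forall_notMem]
  rintro α ⟨hd, hnS, hz⟩
  have hmin : MinGen S (Finsupp.single i₀ (r + 1)) := by
    refine ⟨hr1, fun β hβ hle => ?_⟩
    have hβs : β = Finsupp.single i₀ (β i₀) := by
      ext k
      by_cases hk : k = i₀
      · rw [hk, Finsupp.single_eq_same]
      · have := Finsupp.le_def.mp hle k
        rw [Finsupp.single_apply, if_neg (Ne.symm hk)] at this ⊢
        omega
    have he1 : 1 ≤ β i₀ := by
      rcases Nat.eq_zero_or_pos (β i₀) with h | h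
      · exfalso
        apply h0
        have hβ0 : β = 0 := by rw [hβs, h, Finsupp.single_zero]
        exact hβ0 ▸ hβ
      · exact h
    have he2 : β i₀ ≤ r + 1 := by
      have := Finsupp.le_def.mp hle i₀
      rwa [Finsupp.single_eq_same] at this
    have he3 : r ≤ β i₀ - 1 := by
      apply hrmin
      have : β i₀ - 1 + 1 = β i₀ := by omega
      rw [this, ← hβs]
      exact hβ
    rw [hβs]
    congr 1
    omega
  apply hnS
  by_cases hae : α = Finsupp.single i₀ (r + 1)
  · rw [hae]; exact hr1
  · have hile : α i₀ ≤ r + 1 := hd ▸ apply_le_mdeg α i₀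
    have hlt : α i₀ < r + 1 := by
      rcases Nat.lt_or_ge (α i₀) (r + 1) with h | h
      · exact h
      · exfalso
        apply hae
        have heq : α i₀ = r + 1 := by omega
        have := eq_single_of_apply_eq_mdeg (α := α) (i := i₀) (by omega)
        rwa [heq] at this
    apply hS.2 _ hmin α (by rw [hd, mdeg_single])
    refine Or.inr ⟨by rw [mdeg_single, hd], i₀, ?_, ?_⟩
    · rwa [Finsupp.single_eq_same]
    · intro k hk
      rw [Fin.lt_def] at hk
      have hne : i₀ ≠ k := by intro hc; rw [← hc] at hk; omega
      rw [Finsupp.single_apply, if_neg hne, hz k (by omega)]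

/-- Below the reduction number, the pure power of `x_{n-s}` is a standard monomial. -/
lemma Aset_pos {n : ℕ} {S : Set (Fin n →₀ ℕ)} (h0 : (0 : Fin n →₀ ℕ) ∉ S) (hn : 1 ≤ n)
    {s r : ℕ} (hs : s ≤ n - 1)
    (hrmin : ∀ t, Finsupp.single (⟨n - 1 - s, Nat.lt_of_le_of_lt (Nat.sub_le _ _) (Nat.sub_lt hn Nat.one_pos)⟩ : Fin n) (t + 1) ∈ S → r ≤ t)
    {j : ℕ} (hj : j ≤ r) :
    Finsupp.single (⟨n - 1 - s, Nat.lt_of_le_of_lt (Nat.sub_le _ _) (Nat.sub_lt hn Nat.one_pos)⟩ : Fin n) j ∈ Aset S s j := by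
  set i₀ : Fin n := ⟨n - 1 - s, Nat.lt_of_le_of_lt (Nat.sub_le _ _) (Nat.sub_lt hn Nat.one_pos)⟩ with hi₀
  have hval : (i₀ : ℕ) = n - 1 - s := rfl
  refine ⟨mdeg_single _ _, ?_, ?_⟩
  · intro hmem
    match j, hj with
    | 0, _ => exact h0 (by rwa [Finsupp.single_zero] at hmem)
    | (j' + 1), hj => exact absurd (hrmin j' hmem) (by omega)
  · intro k hk
    have hne : i₀ ≠ k := by intro hc; rw [← hc] at hk; omega
    rw [Finsupp.single_apply, if_neg hne]

/-- Main induction: `Δ^s H` agrees with the Hilbert function of the `s`-th restriction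
in the range where the power of `x_{n-s}` is a standard monomial. -/
lemma psi {n : ℕ} {S : Set (Fin n →₀ ℕ)} (hn : 1 ≤ n) (hS : IsAlmostRevLex S)
    (hArt : {α : Fin n →₀ ℕ | α ∉ S}.Finite) (h0 : (0 : Fin n →₀ ℕ) ∉ S) :
    ∀ s, s ≤ n - 1 → ∀ T : ℕ,
      (∀ t, 1 ≤ t → t ≤ T → Finsupp.single (⟨n - 1 - s, Nat.lt_of_le_of_lt (Nat.sub_le _ _) (Nat.sub_lt hn Nat.one_pos)⟩ : Fin n) t ∉ S) →
      (∀ t ≤ T, fdiff (hilbC S) s t = ((Aset S s t).ncard : ℤ)) ∧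
        fdiff (hilbC S) s (T + 1) ≤ ((Aset S s (T + 1)).ncard : ℤ) := by
  intro s
  induction s with
  | zero =>
    intro _ T _
    have heq : ∀ t, fdiff (hilbC S) 0 t = ((Aset S 0 t).ncard : ℤ) := by
      intro t
      show ((hilbC S t : ℤ)) = _
      rw [hilbC, Aset_level_zero]
    exact ⟨fun t _ => heq t, le_of_eq (heq (T + 1))⟩
  | succ s IH =>
    intro hs1 T hpow
    have hs : s ≤ n - 1 := by omega
    have hlt : (⟨n - 1 - (s + 1), by omega⟩ : Fin n) < (⟨n - 1 - s, Nat.lt_of_le_of_lt (Nat.sub_le _ _) (Nat.sub_lt hn Nat.one_pos)⟩ : Fin n) := by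
      rw [Fin.lt_def]
      show n - 1 - (s + 1) < n - 1 - s
      omega
    have hpow' : ∀ t, 1 ≤ t → t ≤ T →
        Finsupp.single (⟨n - 1 - s, Nat.lt_of_le_of_lt (Nat.sub_le _ _) (Nat.sub_lt hn Nat.one_pos)⟩ : Fin n) t ∉ S :=
      fun t h1 h2 => single_transfer hS h0 hlt (hpow t h1 h2)
    obtain ⟨ihA, ihB⟩ := IH hs T hpow'
    constructor
    · intro t ht
      match t with
      | 0 =>
        show (1 : ℤ) = _
        rw [Aset_zero h0, Set.ncard_singleton, Nat.cast_one]
      | (t + 1) =>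
        have e1 := ihA (t + 1) ht
        have e2 := ihA t (by omega)
        have hsplit := (Aset_split hS hArt hn s t hs1).2 (hpow (t + 1) (by omega) ht)
        show fdiff (hilbC S) s (t + 1) - fdiff (hilbC S) s t = _
        rw [e1, e2, hsplit]
        push_cast
        ring
    · have e2 := ihA T le_rfl
      have hsplit := (Aset_split hS hArt hn s T hs1).1
      show fdiff (hilbC S) s (T + 1) - fdiff (hilbC S) s T ≤ _
      rw [e2]
      have : ((Aset S s (T + 1)).ncard : ℤ) ≤
          ((Aset S (s + 1) (T + 1)).ncard : ℤ) + ((Aset S s T).ncard : ℤ) := by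
        exact_mod_cast hsplit
      linarith

lemma fdiff_one_of_zero (H : ℕ → ℕ) (hH : ∀ t, H t = 0) : ∀ s, fdiff H (s + 1) 1 ≤ 0 := by
  intro s
  induction s with
  | zero => show (H 1 : ℤ) - (H 0 : ℤ) ≤ 0; rw [hH 0, hH 1]; simp
  | succ s ih =>
    show fdiff H (s + 1) 1 - fdiff H (s + 1) 0 ≤ 0
    have h2 : fdiff H (s + 1) 0 = 1 := rfl
    omega

/-- For an Artinian almost revlex ideal `J ⊂ K[x_1,…,x_n]` with Hilbert function `H`, the
`s`-reduction number `r_s = min{t : x_{n-s}^{t+1} ∈ J}` (the variable `x_{n-s}` having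
`0`-based index `n-1-s`) equals `c_s(H) = max{c : Δ^s H(j) > 0 for all 0 ≤ j ≤ c}`, for every
`0 ≤ s ≤ n-1`. -/
theorem reduction_number_eq_c {n : ℕ} (hn : 1 ≤ n)
    (S : Set (Fin n →₀ ℕ)) (hS : IsAlmostRevLex S)
    (hArt : {α : Fin n →₀ ℕ | α ∉ S}.Finite) :
    ∀ s, s ≤ n - 1 → ∀ r c : ℕ,
      (Finsupp.single (⟨n - 1 - s, by omega⟩ : Fin n) (r + 1) ∈ S ∧
        ∀ t, Finsupp.single (⟨n - 1 - s, by omega⟩ : Fin n) (t + 1) ∈ S → r ≤ t) →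
      ((∀ j ≤ c, 0 < fdiff (hilbC S) s j) ∧ fdiff (hilbC S) s (c + 1) ≤ 0) →
      r = c := by
  rintro s hs r c ⟨hr1, hr2⟩ ⟨hc1, hc2⟩
  by_cases h0 : (0 : Fin n →₀ ℕ) ∈ S
  · -- degenerate case : `S` contains all monomials, `H ≡ 0`
    have hall : ∀ α : Fin n →₀ ℕ, α ∈ S := fun α => by
      have := hS.1 0 h0 α
      rwa [zero_add] at this
    have hr0 : r = 0 := Nat.le_zero.mp (hr2 0 (hall _))
    have hH : ∀ t, hilbC S t = 0 := by
      intro t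
      rw [hilbC]
      convert Set.ncard_empty (Fin n →₀ ℕ)
      rw [Set.eq_empty_iff_forall_notMem]
      rintro α ⟨_, h⟩
      exact h (hall α)
    cases s with
    | zero =>
      exfalso
      have h1 := hc1 0 (Nat.zero_le c)
      have h2 : fdiff (hilbC S) 0 0 = ((hilbC S 0 : ℕ) : ℤ) := rfl
      rw [h2, hH 0] at h1
      exact absurd h1 (by norm_num)
    | succ s =>
      have hc0 : c = 0 := by
        by_contra hc
        have h1 := hc1 1 (by omega)
        have h2 := fdiff_one_of_zero (hilbC S) hH s
        omega
      omega
  · -- main case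
    have hpow : ∀ t, 1 ≤ t → t ≤ r →
        Finsupp.single (⟨n - 1 - s, by omega⟩ : Fin n) t ∉ S := by
      intro t h1 h2 hmem
      have h3 : t - 1 + 1 = t := by omega
      have := hr2 (t - 1) (by rwa [h3])
      omega
    obtain ⟨ha, hb⟩ := psi hn hS hArt h0 s hs r hpow
    have hpos : ∀ j ≤ r, 0 < fdiff (hilbC S) s j := by
      intro j hj
      rw [ha j hj]
      have : 0 < (Aset S s j).ncard :=
        (Set.ncard_pos (Aset_finite hArt s j)).mpr ⟨_, Aset_pos h0 hn hs hr2 hj⟩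
      exact_mod_cast this
    have htop : fdiff (hilbC S) s (r + 1) ≤ 0 := by
      rwa [Aset_top hS h0 hn hs hr1 hr2, Set.ncard_empty, Nat.cast_zero] at hb
    rcases lt_trichotomy r c with h | h | h
    · have := hc1 (r + 1) (by omega)
      linarith
    · exact h
    · have := hpos (c + 1) (by omega)
      linarith
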